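/- Let H, δ, ε, R ∈ ℝ with H > 0 and 0 < δ < ε < R. Then there exists a univariate polynomial h ∈ ℝ[T] such that h − 1 is a sum of squares of polynomials and the following hold: (a) h(t) + t·h'(t) > 0 for all t ∈ ℝ; (b) 2h'(t) + t·h''(t) < −H·(h(t) + t·h'(t)) for all t ∈ [−R, R]; (c) H · max{ h(t) + t·h'(t) : t ∈ [ε, R] } < min{ h(t) + t·h'(t) : t ∈ [−R, δ] }. -/

import Mathlib

open Polynomial

noncomputable section

/-- A univariate polynomial is a sum of squares. -/
def IsSOS1 (p : Polynomial ℝ) : Prop :=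
  ∃ (l : ℕ) (q : Fin l → Polynomial ℝ), p = ∑ i, q i ^ 2

lemma isSOS1_zero : IsSOS1 0 := ⟨0, fun _ => 0, by simp⟩

lemma isSOS1_sq (q : Polynomial ℝ) : IsSOS1 (q ^ 2) := ⟨1, fun _ => q, by simp⟩

lemma isSOS1_add {p q : Polynomial ℝ} (hp : IsSOS1 p) (hq : IsSOS1 q) :
    IsSOS1 (p + q) := by
  obtain ⟨l1, q1, rfl⟩ := hp
  obtain ⟨l2, q2, rfl⟩ := hq
  refine ⟨l1 + l2, Fin.addCases q1 q2, ?_⟩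
  rw [Fin.sum_univ_add]
  simp

lemma isSOS1_sum {ι : Type*} (s : Finset ι) (f : ι → Polynomial ℝ)
    (h : ∀ i ∈ s, IsSOS1 (f i)) : IsSOS1 (∑ i ∈ s, f i) :=
  Finset.sum_induction f IsSOS1 (fun _ _ => isSOS1_add) isSOS1_zero h

lemma isSOS1_Cmul {a : ℝ} (ha : 0 ≤ a) {p : Polynomial ℝ} (hp : IsSOS1 p) :
    IsSOS1 (C a * p) := by
  obtain ⟨l, q, rfl⟩ := hp
  refine ⟨l, fun i => C (Real.sqrt a) * q i, ?_⟩
  rw [Finset.mul_sum]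
  refine Finset.sum_congr rfl fun i _ => ?_
  rw [mul_pow, ← C_pow, Real.sq_sqrt ha]

lemma deriv_step1 (b k c : ℝ) (n : ℕ) (hkc : (n : ℝ) * k = c⁻¹) (p : Polynomial ℝ)
    (hXp : X * p = X + C k * ((C b) ^ n - (C b - X) ^ n)) :
    p + X * derivative p = 1 + C c⁻¹ * (C b - X) ^ (n - 1) := by
  have hd := congrArg derivative hXp
  simp only [derivative_add, derivative_sub, derivative_mul, derivative_pow, derivative_C,
    derivative_X, derivative_one, mul_zero, zero_mul, zero_add, add_zero, mul_one, one_mul,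
    zero_sub, sub_zero, mul_neg, neg_neg, sub_neg_eq_add, C_eq_natCast] at hd
  rw [show (C c⁻¹ : Polynomial ℝ) = C k * ((n : ℕ) : Polynomial ℝ) by
    rw [← C_eq_natCast, ← C_mul]; rw [mul_comm] at hkc; rw [hkc]]
  linear_combination hd

lemma deriv_step2 (b a : ℝ) (n : ℕ) (p : Polynomial ℝ)
    (hp : p + X * derivative p = 1 + C a * (C b - X) ^ n) :
    2 * derivative p + X * derivative (derivative p)
      = - (C (a * (n : ℝ)) * (C b - X) ^ (n - 1)) := by
  have hd := congrArg derivative hp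
  simp only [derivative_add, derivative_sub, derivative_mul, derivative_pow, derivative_C,
    derivative_X, derivative_one, mul_zero, zero_mul, zero_add, add_zero, mul_one, one_mul,
    zero_sub, sub_zero, mul_neg, neg_neg, sub_neg_eq_add, C_eq_natCast] at hd
  rw [show (C (a * (n : ℝ)) : Polynomial ℝ) = C a * ((n : ℕ) : Polynomial ℝ) by
    rw [← C_eq_natCast, ← C_mul]]
  linear_combination hd

lemma key_lemma (x y : Polynomial ℝ) (m : ℕ) (hwne : (x - y) * ((x - y) * (x + y)) ≠ 0) :
    (2 : Polynomial ℝ) * (∑ i ∈ Finset.range (2 * m + 1), x ^ i * y ^ (2 * m + 1 - 1 - i))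
      = x ^ (2 * m) + y ^ (2 * m)
        + ∑ j ∈ Finset.range m, ((x + y) * (x ^ j * y ^ (m - 1 - j))) ^ 2 := by
  have hgs1 := geom_sum₂_mul x y (2 * m + 1)
  have hgs2 := geom_sum₂_mul (x ^ 2) (y ^ 2) m
  set L : Polynomial ℝ := ∑ i ∈ Finset.range (2 * m + 1), x ^ i * y ^ (2 * m + 1 - 1 - i)
  set S : Polynomial ℝ := ∑ i ∈ Finset.range m, (x ^ 2) ^ i * (y ^ 2) ^ (m - 1 - i)
  have e1 : ∑ j ∈ Finset.range m, ((x + y) * (x ^ j * y ^ (m - 1 - j))) ^ 2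
      = (x + y) ^ 2 * S := by
    rw [Finset.mul_sum]
    refine Finset.sum_congr rfl fun j _ => ?_
    rw [mul_pow, mul_pow, ← pow_mul, ← pow_mul, mul_comm j 2, mul_comm (m - 1 - j) 2,
      pow_mul, pow_mul]
  apply mul_right_cancel₀ hwne
  rw [e1]
  have expand2 : (2 * L) * ((x - y) * ((x - y) * (x + y)))
      = (2 * ((x - y) * (x + y))) * (L * (x - y)) := by ring
  have expand : (x ^ (2 * m) + y ^ (2 * m) + (x + y) ^ 2 * S)
        * ((x - y) * ((x - y) * (x + y)))
      = (x ^ (2 * m) + y ^ (2 * m)) * ((x - y) * ((x - y) * (x + y)))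
        + ((x + y) ^ 2 * (x - y)) * (S * (x ^ 2 - y ^ 2)) := by ring
  rw [expand2, hgs1, expand, hgs2]
  rw [← pow_mul, ← pow_mul]
  ring

lemma numeric_decay (H w v μ B : ℝ) (hH : 0 < H) (hv1 : 1 ≤ v) (hw : H * w ≤ B)
    (hB : B + 1 ≤ μ) (hμ : 0 ≤ μ) :
    -(2 * H * (2 * μ) * v) < -H * (1 + 2 * H * (v * w)) := by
  have hv0 : 0 ≤ v := by linarith
  have hq1 : 2 * H * (H * w * v) ≤ 2 * H * (B * v) := by
    apply mul_le_mul_of_nonneg_left _ (by positivity)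
    exact mul_le_mul_of_nonneg_right hw hv0
  have hq2 : 2 * H * ((B + 1) * v) ≤ 2 * H * (μ * v) := by
    apply mul_le_mul_of_nonneg_left _ (by positivity)
    exact mul_le_mul_of_nonneg_right hB hv0
  have hp3 : H * 1 ≤ H * v := mul_le_mul_of_nonneg_left hv1 hH.le
  have hp4 : 0 ≤ H * (μ * v) := mul_nonneg hH.le (mul_nonneg hμ hv0)
  nlinarith [hq1, hq2, hp3, hp4]

lemma numeric_mid (H A D : ℝ) (hH : 0 < H) (hA1 : 1 ≤ A)
    (hD : A * (1 + (H + 2⁻¹)) ≤ D) :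
    H * (1 + 2 * H * A) < 1 + 2 * H * D := by
  have hD2 : 2 * H * (A * (1 + (H + 2⁻¹))) ≤ 2 * H * D :=
    mul_le_mul_of_nonneg_left hD (by positivity)
  have hHA : H * 1 ≤ H * A := mul_le_mul_of_nonneg_left hA1 hH.le
  nlinarith [hD2, hHA]

set_option maxHeartbeats 1000000 in
theorem stmt_11 (H δ ε R : ℝ) (hH : 0 < H) (h0δ : 0 < δ) (hδε : δ < ε) (hεR : ε < R) :
    ∃ h : Polynomial ℝ, IsSOS1 (h - 1) ∧
      (∀ t : ℝ, 0 < h.eval t + t * (derivative h).eval t) ∧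
      (∀ t ∈ Set.Icc (-R) R,
        2 * (derivative h).eval t + t * (derivative (derivative h)).eval t <
          -H * (h.eval t + t * (derivative h).eval t)) ∧
      H * sSup ((fun t : ℝ => h.eval t + t * (derivative h).eval t) '' Set.Icc ε R) <
        sInf ((fun t : ℝ => h.eval t + t * (derivative h).eval t) '' Set.Icc (-R) δ) := by
  have hR : 0 < R := h0δ.trans (hδε.trans hεR)
  set b : ℝ := R + 1 with hbdef
  have hb : 0 < b := by positivity
  have hbε : 1 < b - ε := by simp only [hbdef]; linarith
  have hbε0 : 0 < b - ε := by linarith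
  have hεδ : 0 < ε - δ := by linarith
  set c : ℝ := (2 * H)⁻¹ with hcdef
  have hc : 0 < c := by positivity
  have hcinv : c⁻¹ = 2 * H := by rw [hcdef, inv_inv]
  obtain ⟨m, hm⟩ : ∃ m : ℕ,
      H * (2 * R + 1) + 1 + (H + 2⁻¹) * (b - ε) / (ε - δ) + 1 ≤ (m : ℝ) :=
    exists_nat_ge _
  have hterm3 : 0 < (H + 2⁻¹) * (b - ε) / (ε - δ) := by positivity
  have hterm1 : 0 < H * (2 * R + 1) := by positivity
  have hm1R : (1 : ℝ) ≤ (m : ℝ) := by linarith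
  have hmb1 : H * (2 * R + 1) + 1 ≤ (m : ℝ) := by linarith
  have hmb2 : (H + 2⁻¹) * (b - ε) / (ε - δ) ≤ (m : ℝ) := by linarith
  have hm1 : 1 ≤ m := by exact_mod_cast hm1R
  set k : ℝ := ((2 * (m : ℝ) + 1) * c)⁻¹ with hkdef
  have h2m1 : (0 : ℝ) < 2 * (m : ℝ) + 1 := by positivity
  have hk : 0 < k := by positivity
  -- the polynomials
  set x : Polynomial ℝ := C b with hxdef
  set y : Polynomial ℝ := C b - X with hydef
  set L : Polynomial ℝ := ∑ i ∈ Finset.range (2 * m + 1), x ^ i * y ^ (2 * m + 1 - 1 - i)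
    with hLdef
  set h : Polynomial ℝ := 1 + C k * L with hhdef
  have hxy : x - y = X := by rw [hxdef, hydef]; ring
  have hgs1 : L * X = x ^ (2 * m + 1) - y ^ (2 * m + 1) := by
    rw [← hxy, hLdef]; exact geom_sum₂_mul x y (2 * m + 1)
  -- first key identity: X * h
  have hXh : X * h = X + C k * (x ^ (2 * m + 1) - y ^ (2 * m + 1)) := by
    rw [← hgs1, hhdef]; ring
  have hkc : ((2 * m + 1 : ℕ) : ℝ) * k = c⁻¹ := by
    rw [hkdef]
    push_cast
    rw [mul_inv, ← mul_assoc, mul_inv_cancel₀ (by positivity)]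
    ring
  have hG : h + X * derivative h = 1 + C c⁻¹ * y ^ (2 * m) := by
    have := deriv_step1 b k c (2 * m + 1) hkc h (by rw [hXh, hxdef, hydef])
    rw [Nat.add_sub_cancel] at this
    rw [← hxdef, ← hydef] at this
    exact this
  have hfe : ∀ t : ℝ, h.eval t + t * (derivative h).eval t
      = 1 + c⁻¹ * (b - t) ^ (2 * m) := by
    intro t
    have := congrArg (eval t) hG
    simpa [hydef] using this
  have hG2 : 2 * derivative h + X * derivative (derivative h)
      = - (C (c⁻¹ * ((2 * m : ℕ) : ℝ)) * y ^ (2 * m - 1)) := by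
    have := deriv_step2 b c⁻¹ (2 * m) h (by rw [hG, hydef])
    rw [← hydef] at this
    exact this
  have hfe2 : ∀ t : ℝ, 2 * (derivative h).eval t + t * (derivative (derivative h)).eval t
      = - (c⁻¹ * ((2 * m : ℕ) : ℝ) * (b - t) ^ (2 * m - 1)) := by
    intro t
    have := congrArg (eval t) hG2
    simpa [hydef] using this
  refine ⟨h, ?_, ?_, ?_, ?_⟩
  · -- SOS part
    have hwne : (x - y) * ((x - y) * (x + y)) ≠ 0 := by
      have hX : (X : Polynomial ℝ) ≠ 0 := X_ne_zero
      have hxyne : x + y ≠ 0 := by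
        intro hcon
        have := congrArg (eval 0) hcon
        simp [hxdef, hydef] at this
        linarith
      rw [hxy]
      exact mul_ne_zero hX (mul_ne_zero hX hxyne)
    have key := key_lemma x y m hwne
    rw [← hLdef] at key
    have hC2 : (C (2 : ℝ) : Polynomial ℝ) = 2 := map_ofNat C 2
    have h2L : C (k / 2) * (2 * L) = C k * L := by
      rw [← hC2, ← mul_assoc, ← C_mul]
      congr 2
      ring
    have hh1 : h - 1 = C (k / 2) * (2 * L) := by rw [hhdef, h2L]; ring
    rw [hh1, key]
    refine isSOS1_Cmul (by positivity) ?_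
    refine isSOS1_add (isSOS1_add ?_ ?_) ?_
    · rw [show 2 * m = m * 2 by ring, pow_mul]; exact isSOS1_sq _
    · rw [show 2 * m = m * 2 by ring, pow_mul]; exact isSOS1_sq _
    · exact isSOS1_sum _ _ fun j _ => isSOS1_sq _
  · -- positivity everywhere
    intro t
    rw [hfe t]
    have he : 0 ≤ (b - t) ^ (2 * m) := Even.pow_nonneg ⟨m, two_mul m⟩ _
    have hcpos : 0 < c⁻¹ := by positivity
    nlinarith
  · -- decay estimate on [-R, R]
    rintro t ⟨ht1, ht2⟩
    rw [hfe t, hfe2 t, hcinv]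
    have hu1 : 1 ≤ b - t := by rw [hbdef]; linarith
    have hu2 : b - t ≤ 2 * R + 1 := by rw [hbdef]; linarith
    have hv1 : (1 : ℝ) ≤ (b - t) ^ (2 * m - 1) := one_le_pow₀ hu1
    have hupow : (b - t) ^ (2 * m) = (b - t) ^ (2 * m - 1) * (b - t) := by
      rw [← pow_succ]
      congr 1
      omega
    rw [hupow]
    push_cast
    have hw : H * (b - t) ≤ H * (2 * R + 1) := mul_le_mul_of_nonneg_left hu2 hH.le
    exact numeric_decay H (b - t) ((b - t) ^ (2 * m - 1)) (m : ℝ) (H * (2 * R + 1))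
      hH hv1 hw hmb1 (Nat.cast_nonneg m)
  · -- the sup/inf estimate
    have hfeq : (fun t : ℝ => h.eval t + t * (derivative h).eval t)
        = fun t : ℝ => 1 + c⁻¹ * (b - t) ^ (2 * m) := by
      funext t; exact hfe t
    rw [hfeq]
    set f : ℝ → ℝ := fun t : ℝ => 1 + c⁻¹ * (b - t) ^ (2 * m) with hfdef
    have hne1 : (f '' Set.Icc ε R).Nonempty :=
      ⟨f ε, ⟨ε, ⟨le_refl ε, hεR.le⟩, rfl⟩⟩
    have hne2 : (f '' Set.Icc (-R) δ).Nonempty :=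
      ⟨f δ, ⟨δ, ⟨by linarith, le_refl δ⟩, rfl⟩⟩
    have hsup : sSup (f '' Set.Icc ε R) ≤ f ε := by
      apply csSup_le hne1
      rintro w ⟨t, ⟨htl, htr⟩, rfl⟩
      have h1 : 0 ≤ b - t := by rw [hbdef]; linarith
      have h2 : b - t ≤ b - ε := by linarith
      have h3 : (b - t) ^ (2 * m) ≤ (b - ε) ^ (2 * m) := pow_le_pow_left₀ h1 h2 _
      have h4 : c⁻¹ * (b - t) ^ (2 * m) ≤ c⁻¹ * (b - ε) ^ (2 * m) :=
        mul_le_mul_of_nonneg_left h3 (by positivity)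
      simp only [hfdef]
      linarith
    have hinf : f δ ≤ sInf (f '' Set.Icc (-R) δ) := by
      apply le_csInf hne2
      rintro w ⟨t, ⟨htl, htr⟩, rfl⟩
      have h1 : 0 ≤ b - δ := by rw [hbdef]; linarith
      have h2 : b - δ ≤ b - t := by linarith
      have h3 : (b - δ) ^ (2 * m) ≤ (b - t) ^ (2 * m) := pow_le_pow_left₀ h1 h2 _
      have h4 : c⁻¹ * (b - δ) ^ (2 * m) ≤ c⁻¹ * (b - t) ^ (2 * m) :=
        mul_le_mul_of_nonneg_left h3 (by positivity)
      simp only [hfdef]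
      linarith
    have hmid : H * f ε < f δ := by
      simp only [hfdef, hcinv]
      have hεδne : ε - δ ≠ 0 := ne_of_gt hεδ
      have hbεne : b - ε ≠ 0 := ne_of_gt hbε0
      have hx0 : 0 < (ε - δ) / (b - ε) := by positivity
      have hmx : H + 2⁻¹ ≤ (m : ℝ) * ((ε - δ) / (b - ε)) := by
        have step := mul_le_mul_of_nonneg_right hmb2 hx0.le
        calc H + 2⁻¹ = (H + 2⁻¹) * (b - ε) / (ε - δ) * ((ε - δ) / (b - ε)) := by
              field_simp
          _ ≤ (m : ℝ) * ((ε - δ) / (b - ε)) := step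
      have hbern : 1 + ((2 * m : ℕ) : ℝ) * ((ε - δ) / (b - ε))
          ≤ (1 + (ε - δ) / (b - ε)) ^ (2 * m) :=
        one_add_mul_le_pow (by linarith : (-2 : ℝ) ≤ (ε - δ) / (b - ε)) (2 * m)
      have h2mx : (m : ℝ) * ((ε - δ) / (b - ε)) ≤ ((2 * m : ℕ) : ℝ) * ((ε - δ) / (b - ε)) := by
        apply mul_le_mul_of_nonneg_right _ hx0.le
        push_cast
        linarith
      have hP : 1 + (H + 2⁻¹) ≤ (1 + (ε - δ) / (b - ε)) ^ (2 * m) := by linarith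
      have hsplit : b - δ = (b - ε) * (1 + (ε - δ) / (b - ε)) := by field_simp; ring
      have hA1 : (1 : ℝ) ≤ (b - ε) ^ (2 * m) := one_le_pow₀ hbε.le
      have hA0 : (0 : ℝ) ≤ (b - ε) ^ (2 * m) := by linarith
      have hDge : (b - ε) ^ (2 * m) * (1 + (H + 2⁻¹)) ≤ (b - δ) ^ (2 * m) := by
        calc (b - ε) ^ (2 * m) * (1 + (H + 2⁻¹))
            ≤ (b - ε) ^ (2 * m) * (1 + (ε - δ) / (b - ε)) ^ (2 * m) :=
              mul_le_mul_of_nonneg_left hP hA0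
          _ = (b - δ) ^ (2 * m) := by rw [← mul_pow, ← hsplit]
      exact numeric_mid H ((b - ε) ^ (2 * m)) ((b - δ) ^ (2 * m)) hH hA1 hDge
    calc H * sSup (f '' Set.Icc ε R) ≤ H * f ε :=
          mul_le_mul_of_nonneg_left hsup hH.le
      _ < f δ := hmid
      _ ≤ sInf (f '' Set.Icc (-R) δ) := hinf
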